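/- Let A₁,…,A_m, B₁,…,B_m be Hermitian positive definite n×n matrices and define R(v) = Σ_{k=1}^m log₂((vᴴA_k v)/(vᴴB_k v)) for nonzero v. If v* ≠ 0 satisfies the eigenvector equation B_KKT(v*)⁻¹ A_KKT(v*) v* = λ(v*) v*, where A_KKT(v) = Σ_k A_k/(vᴴA_k v) and B_KKT(v) = Σ_k B_k/(vᴴB_k v) and λ(v) = ∏_k (vᴴA_k v)/(vᴴB_k v), then the gradient of R at v* (as a function on ℂⁿ∖{0}) vanishes in directions orthogonal to v*, i.e., v* is a stationary point of R restricted to the unit sphere. -/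

import Mathlib

open Matrix
open scoped ComplexOrder

noncomputable def cd {n : ℕ} (M : Matrix (Fin n) (Fin n) ℂ) (p : Fin n → ℂ) :
    (Fin n → ℂ) →L[ℝ] ℂ :=
  LinearMap.toContinuousLinearMap
    { toFun := fun w => (star w) ⬝ᵥ (M *ᵥ p) + (star p) ⬝ᵥ (M *ᵥ w)
      map_add' := by
        intro w w'
        simp [star_add, add_dotProduct, Matrix.mulVec_add, dotProduct_add]
        ring
      map_smul' := by
        intro r w
        simp [star_smul, Matrix.mulVec_smul, smul_dotProduct, dotProduct_smul, smul_add] }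

lemma cd_apply {n : ℕ} (M : Matrix (Fin n) (Fin n) ℂ) (p w : Fin n → ℂ) :
    cd M p w = (star w) ⬝ᵥ (M *ᵥ p) + (star p) ⬝ᵥ (M *ᵥ w) := rfl

lemma quad_hasFDerivAt {n : ℕ} (M : Matrix (Fin n) (Fin n) ℂ) (p : Fin n → ℂ) :
    HasFDerivAt (fun u : Fin n → ℂ => (star u) ⬝ᵥ (M *ᵥ u)) (cd M p) p := by
  set md : (Fin n → ℂ) →L[ℝ] (Fin n → ℂ) :=
    LinearMap.toContinuousLinearMap ((Matrix.mulVecLin M).restrictScalars ℝ) with hmd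
  have hmdapp : ∀ u, md u = M *ᵥ u := fun u => rfl
  have h1 : ∀ i : Fin n, HasFDerivAt (fun u : Fin n → ℂ => (starRingEnd ℂ) (u i))
      (Complex.conjCLE.toContinuousLinearMap.comp (ContinuousLinearMap.proj i)) p := by
    intro i
    have := (Complex.conjCLE.toContinuousLinearMap.comp
      ((ContinuousLinearMap.proj i : (Fin n → ℂ) →L[ℝ] ℂ))).hasFDerivAt (x := p)
    exact this
  have h2 : ∀ i : Fin n, HasFDerivAt (fun u : Fin n → ℂ => (M *ᵥ u) i)
      ((ContinuousLinearMap.proj i).comp md) p := by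
    intro i
    exact ((ContinuousLinearMap.proj i).comp md).hasFDerivAt
  have hsum := HasFDerivAt.fun_sum (fun i (_ : i ∈ Finset.univ) => (h1 i).mul (h2 i))
  have hfun : (fun u : Fin n → ℂ => (star u) ⬝ᵥ (M *ᵥ u)) =
      (fun u => ∑ i, (starRingEnd ℂ) (u i) * (M *ᵥ u) i) := by
    funext u; simp [dotProduct]
  rw [hfun]
  refine hsum.congr_fderiv (Eq.symm ?_)
  ext w
  simp [hmdapp, cd_apply, dotProduct, Matrix.mulVec, ContinuousLinearMap.sum_apply,
    ContinuousLinearMap.add_apply, ContinuousLinearMap.smul_apply, ContinuousLinearMap.comp_apply,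
    ContinuousLinearMap.proj_apply, Complex.conjCLE_apply, smul_eq_mul]
  rw [← Finset.sum_add_distrib]
  refine Finset.sum_congr rfl fun i _ => by ring

lemma quad_re_hasFDerivAt {n : ℕ} (M : Matrix (Fin n) (Fin n) ℂ) (p : Fin n → ℂ) :
    HasFDerivAt (fun u : Fin n → ℂ => ((star u) ⬝ᵥ (M *ᵥ u)).re)
      (Complex.reCLM.comp (cd M p)) p := by
  have h := (quad_hasFDerivAt M p)
  have h2 : HasFDerivAt (fun z : ℂ => z.re) Complex.reCLM ((star p) ⬝ᵥ (M *ᵥ p)) :=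
    Complex.reCLM.hasFDerivAt
  exact h2.comp p h

lemma quad_re_continuous {n : ℕ} (M : Matrix (Fin n) (Fin n) ℂ) :
    Continuous (fun u : Fin n → ℂ => ((star u) ⬝ᵥ (M *ᵥ u)).re) :=
  continuous_iff_continuousAt.2 fun p => (quad_re_hasFDerivAt M p).differentiableAt.continuousAt

lemma sum_smul_mulVec {n m : ℕ} (c : Fin m → ℂ) (N : Fin m → Matrix (Fin n) (Fin n) ℂ)
    (x : Fin n → ℂ) : (∑ k, c k • N k) *ᵥ x = ∑ k, c k • (N k *ᵥ x) := by
  funext i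
  simp [Matrix.mulVec, dotProduct, Matrix.sum_apply, Matrix.smul_apply, smul_eq_mul,
    Finset.sum_apply, Finset.sum_mul, Finset.mul_sum, mul_assoc]
  rw [Finset.sum_comm]

lemma dotProduct_sum' {n m : ℕ} (x : Fin n → ℂ) (y : Fin m → Fin n → ℂ) :
    x ⬝ᵥ (∑ k, y k) = ∑ k, x ⬝ᵥ (y k) := by
  simp [dotProduct, Finset.sum_apply, Finset.mul_sum]
  rw [Finset.sum_comm]

lemma posdef_quad_re_pos {n : ℕ} {M : Matrix (Fin n) (Fin n) ℂ} (hM : M.PosDef)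
    {x : Fin n → ℂ} (hx : x ≠ 0) : 0 < ((star x) ⬝ᵥ (M *ᵥ x)).re := by
  have h := hM.dotProduct_mulVec_pos hx
  rw [Complex.lt_def] at h
  simpa using h.1

lemma posdef_quad_real {n : ℕ} {M : Matrix (Fin n) (Fin n) ℂ} (hM : M.PosDef)
    {x : Fin n → ℂ} (hx : x ≠ 0) :
    (star x) ⬝ᵥ (M *ᵥ x) = ((((star x) ⬝ᵥ (M *ᵥ x)).re : ℝ) : ℂ) := by
  have h := hM.dotProduct_mulVec_pos hx
  rw [Complex.lt_def] at h
  exact Complex.ext rfl (by simpa using h.2.symm)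

theorem gpi_fixed_point_stationary (n m : ℕ)
    (A B : Fin m → Matrix (Fin n) (Fin n) ℂ)
    (hA : ∀ k, (A k).PosDef) (hB : ∀ k, (B k).PosDef)
    (v : Fin n → ℂ) (hv : v ≠ 0)
    (R : (Fin n → ℂ) → ℝ)
    (hR : ∀ u : Fin n → ℂ, R u =
      ∑ k, Real.logb 2 (((star u) ⬝ᵥ ((A k) *ᵥ u)).re / ((star u) ⬝ᵥ ((B k) *ᵥ u)).re))
    (heig : ((∑ k, ((((star v) ⬝ᵥ ((B k) *ᵥ v)).re : ℂ))⁻¹ • B k)⁻¹ *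
        (∑ k, ((((star v) ⬝ᵥ ((A k) *ᵥ v)).re : ℂ))⁻¹ • A k)) *ᵥ v =
      (((∏ k, ((star v) ⬝ᵥ ((A k) *ᵥ v)).re / ((star v) ⬝ᵥ ((B k) *ᵥ v)).re : ℝ)) : ℂ) • v) :
    ∀ w : Fin n → ℂ, (star v) ⬝ᵥ w = 0 → fderiv ℝ R v w = 0 := by
  intro w _
  -- dispose of the degenerate case m = 0
  rcases Nat.eq_zero_or_pos m with hm | hm
  · subst hm
    simp only [Finset.univ_eq_empty, Finset.sum_empty, Finset.prod_empty, Complex.ofReal_one,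
      one_smul, Matrix.mul_zero, Matrix.zero_mulVec] at heig
    exact absurd heig.symm hv
  -- abbreviations
  set qa : Fin m → ℝ := fun k => ((star v) ⬝ᵥ ((A k) *ᵥ v)).re with hqa
  set qb : Fin m → ℝ := fun k => ((star v) ⬝ᵥ ((B k) *ᵥ v)).re with hqb
  set AK : Matrix (Fin n) (Fin n) ℂ := ∑ k, ((qa k : ℂ))⁻¹ • A k with hAK
  set BK : Matrix (Fin n) (Fin n) ℂ := ∑ k, ((qb k : ℂ))⁻¹ • B k with hBK
  set lam : ℝ := ∏ k, qa k / qb k with hlamdef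
  have ha : ∀ k, 0 < qa k := fun k => posdef_quad_re_pos (hA k) hv
  have hb : ∀ k, 0 < qb k := fun k => posdef_quad_re_pos (hB k) hv
  have hrealA : ∀ k, (star v) ⬝ᵥ ((A k) *ᵥ v) = ((qa k : ℝ) : ℂ) :=
    fun k => posdef_quad_real (hA k) hv
  have hrealB : ∀ k, (star v) ⬝ᵥ ((B k) *ᵥ v) = ((qb k : ℝ) : ℂ) :=
    fun k => posdef_quad_real (hB k) hv
  -- Hermitian property of the KKT matrices
  have hAH : AKᴴ = AK := by
    rw [hAK, Matrix.conjTranspose_sum]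
    refine Finset.sum_congr rfl fun k _ => ?_
    rw [Matrix.conjTranspose_smul, (hA k).1]
    congr 1
    simp [Complex.conj_ofReal]
  have hBH : BKᴴ = BK := by
    rw [hBK, Matrix.conjTranspose_sum]
    refine Finset.sum_congr rfl fun k _ => ?_
    rw [Matrix.conjTranspose_smul, (hB k).1]
    congr 1
    simp [Complex.conj_ofReal]
  -- BK is positive definite, hence invertible
  have hBKpos : BK.PosDef := by
    refine Matrix.PosDef.of_dotProduct_mulVec_pos hBH fun x hx => ?_
    have hrew : (star x) ⬝ᵥ (BK *ᵥ x) =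
        ((∑ k, (qb k)⁻¹ * ((star x) ⬝ᵥ ((B k) *ᵥ x)).re : ℝ) : ℂ) := by
      rw [hBK, sum_smul_mulVec, dotProduct_sum']
      push_cast
      refine Finset.sum_congr rfl fun k _ => ?_
      rw [dotProduct_smul, smul_eq_mul, posdef_quad_real (hB k) hx]
      simp
    rw [hrew]
    exact Complex.zero_lt_real.2 (Finset.sum_pos
      (fun k _ => mul_pos (inv_pos.2 (hb k)) (posdef_quad_re_pos (hB k) hx))
      ⟨⟨0, hm⟩, Finset.mem_univ _⟩)
  have hdet : IsUnit BK.det := isUnit_iff_ne_zero.2 hBKpos.det_pos.ne'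
  -- from the eigenvector equation: AK v = lam • BK v
  have h1 : AK *ᵥ v = (lam : ℂ) • (BK *ᵥ v) := by
    have h1 := congrArg (fun y => BK *ᵥ y) heig
    simp only [Matrix.mulVec_mulVec, Matrix.mulVec_smul] at h1
    rwa [Matrix.mul_nonsing_inv_cancel_left _ _ hdet] at h1
  -- compute the two Rayleigh sums
  have hAKv : (star v) ⬝ᵥ (AK *ᵥ v) = (m : ℂ) := by
    have hterm : ∀ k : Fin m, (star v) ⬝ᵥ (((qa k : ℂ))⁻¹ • ((A k) *ᵥ v)) = 1 := by
      intro k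
      rw [dotProduct_smul, smul_eq_mul, hrealA k, inv_mul_cancel₀]
      exact_mod_cast (ha k).ne'
    simp [hAK, sum_smul_mulVec, dotProduct_sum', hterm]
  have hBKv : (star v) ⬝ᵥ (BK *ᵥ v) = (m : ℂ) := by
    have hterm : ∀ k : Fin m, (star v) ⬝ᵥ (((qb k : ℂ))⁻¹ • ((B k) *ᵥ v)) = 1 := by
      intro k
      rw [dotProduct_smul, smul_eq_mul, hrealB k, inv_mul_cancel₀]
      exact_mod_cast (hb k).ne'
    simp [hBK, sum_smul_mulVec, dotProduct_sum', hterm]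
  -- lam = 1 and AK v = BK v
  have hlam1 : (lam : ℂ) = 1 := by
    have h2 := congrArg (fun y => (star v) ⬝ᵥ y) h1
    simp only [dotProduct_smul, smul_eq_mul, hAKv, hBKv] at h2
    have hm0 : (m : ℂ) ≠ 0 := Nat.cast_ne_zero.2 hm.ne'
    field_simp at h2
    exact_mod_cast h2.symm
  have heqv : AK *ᵥ v = BK *ᵥ v := by rw [h1, hlam1, one_smul]
  -- derivative of the log-Rayleigh sum
  have hlogA : ∀ k, HasFDerivAt (fun u => Real.log (((star u) ⬝ᵥ ((A k) *ᵥ u)).re))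
      ((qa k)⁻¹ • (Complex.reCLM.comp (cd (A k) v))) v := fun k =>
    (quad_re_hasFDerivAt (A k) v).log (ha k).ne'
  have hlogB : ∀ k, HasFDerivAt (fun u => Real.log (((star u) ⬝ᵥ ((B k) *ᵥ u)).re))
      ((qb k)⁻¹ • (Complex.reCLM.comp (cd (B k) v))) v := fun k =>
    (quad_re_hasFDerivAt (B k) v).log (hb k).ne'
  have hS := HasFDerivAt.fun_sum (u := Finset.univ)
    (fun k (_ : k ∈ Finset.univ) => ((hlogA k).sub (hlogB k)).mul_const ((Real.log 2)⁻¹))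
  -- R agrees with the sum-of-logs near v
  have hevA : ∀ᶠ u in nhds v, ∀ k, 0 < ((star u) ⬝ᵥ ((A k) *ᵥ u)).re :=
    Filter.eventually_all.2 fun k =>
      (quad_re_continuous (A k)).continuousAt.preimage_mem_nhds (Ioi_mem_nhds (ha k))
  have hevB : ∀ᶠ u in nhds v, ∀ k, 0 < ((star u) ⬝ᵥ ((B k) *ᵥ u)).re :=
    Filter.eventually_all.2 fun k =>
      (quad_re_continuous (B k)).continuousAt.preimage_mem_nhds (Ioi_mem_nhds (hb k))
  have hRS : R =ᶠ[nhds v] (fun u => ∑ k, (Real.log (((star u) ⬝ᵥ ((A k) *ᵥ u)).re) -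
      Real.log (((star u) ⬝ᵥ ((B k) *ᵥ u)).re)) * (Real.log 2)⁻¹) := by
    filter_upwards [hevA, hevB] with u hA' hB'
    rw [hR u]
    refine Finset.sum_congr rfl fun k _ => ?_
    rw [Real.logb, Real.log_div (hA' k).ne' (hB' k).ne', div_eq_mul_inv]
  have hfd : fderiv ℝ R v w = 0 := by
    rw [hRS.fderiv_eq, (show HasFDerivAt (fun u => ∑ k, (Real.log (((star u) ⬝ᵥ ((A k) *ᵥ u)).re) -
        Real.log (((star u) ⬝ᵥ ((B k) *ᵥ u)).re)) * (Real.log 2)⁻¹) _ v from hS).fderiv]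
    simp only [ContinuousLinearMap.coe_sum', Finset.sum_apply,
      ContinuousLinearMap.smulRight_apply, ContinuousLinearMap.coe_sub',
      Pi.sub_apply, ContinuousLinearMap.coe_smul', Pi.smul_apply,
      ContinuousLinearMap.coe_comp', Function.comp_apply, Complex.reCLM_apply,
      cd_apply, smul_eq_mul]
    rw [← Finset.mul_sum, mul_eq_zero]
    right
    -- reduce to a statement about complex sums
    have hre : ∀ (r : ℝ) (z : ℂ), r⁻¹ * z.re = (((r : ℂ))⁻¹ * z).re := by
      intro r z
      simp [Complex.mul_re]
    have hkey : ∑ k, ((qa k)⁻¹ *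
          ((star w) ⬝ᵥ ((A k) *ᵥ v) + (star v) ⬝ᵥ ((A k) *ᵥ w)).re -
        (qb k)⁻¹ * ((star w) ⬝ᵥ ((B k) *ᵥ v) + (star v) ⬝ᵥ ((B k) *ᵥ w)).re) =
        (((star w) ⬝ᵥ (AK *ᵥ v) + (star v) ⬝ᵥ (AK *ᵥ w)) -
         ((star w) ⬝ᵥ (BK *ᵥ v) + (star v) ⬝ᵥ (BK *ᵥ w))).re := by
      rw [hAK, hBK, sum_smul_mulVec, sum_smul_mulVec, sum_smul_mulVec, sum_smul_mulVec,
        dotProduct_sum', dotProduct_sum', dotProduct_sum', dotProduct_sum']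
      simp only [dotProduct_smul, smul_eq_mul, ← Finset.sum_add_distrib, ← mul_add]
      rw [← Finset.sum_sub_distrib, Complex.re_sum]
      refine Finset.sum_congr rfl fun k _ => ?_
      rw [Complex.sub_re, hre, hre]
    rw [hkey]
    -- the second slots agree thanks to hermitian symmetry
    have hsec : (star v) ⬝ᵥ (AK *ᵥ w) = (star v) ⬝ᵥ (BK *ᵥ w) := by
      rw [Matrix.dotProduct_mulVec, Matrix.dotProduct_mulVec]
      have hst : star (AK *ᵥ v) = star (BK *ᵥ v) := congrArg star heqv
      rw [Matrix.star_mulVec, Matrix.star_mulVec, hAH, hBH] at hst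
      rw [hst]
    rw [heqv, hsec, sub_self, Complex.zero_re]
  exact hfd
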